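/- Let X be a proper, locally connected metric space and Ω ⊆ X a bounded domain. Then the completion clΩ_M of the metric space Ω_M = (Ω,dM) is compact if and only if Ω is finitely connected at the boundary. -/

import Mathlib

open Set MeasureTheory Filter ENNReal NNReal Metric Topology

noncomputable section

/-- Extended absolute value of the "difference" of two extended reals; with Mathlib's
`EReal` subtraction conventions, `erealAbs (a - b) = ∞` whenever both `a` and `b`
are infinite, matching the convention for the upper gradient inequality. -/
def erealAbs (a : EReal) : ℝ≥0∞ :=
  if a = ⊤ ∨ a = ⊥ then ⊤ else ENNReal.ofReal |a.toReal|

/-- Variation of `γ` over `[a,b]` computed with respect to an arbitrary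
distance-like function `ρ`, as a supremum over partitions
`a = t 0 ≤ t 1 ≤ ⋯ ≤ t n = b`. -/
def variationWith {Y : Type*} (ρ : Y → Y → ℝ≥0∞) (γ : ℝ → Y) (a b : ℝ) : ℝ≥0∞ :=
  ⨆ P ∈ {P : ℕ × (ℕ → ℝ) |
      Monotone P.2 ∧ (∀ i, P.2 i ∈ Set.Icc a b) ∧ P.2 0 = a ∧ P.2 P.1 = b},
    ∑ i ∈ Finset.range P.1, ρ (γ (P.2 i)) (γ (P.2 (i + 1)))

/-- `γ : [0,L] → Y` is parameterized by arc length with respect to `ρ`. -/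
def IsArcLengthParamWith {Y : Type*} (ρ : Y → Y → ℝ≥0∞) (γ : ℝ → Y) (L : ℝ) : Prop :=
  ∀ s t : ℝ, s ∈ Set.Icc 0 L → t ∈ Set.Icc 0 L → s ≤ t →
    variationWith ρ γ s t = ENNReal.ofReal (t - s)

/-- `g` is an upper gradient of `f` on `S` with respect to the distance `ρ`:
for every (nonconstant, compact, rectifiable) curve in `S` parameterized by
arc length, the upper gradient inequality holds. -/
def IsUpperGradientWith {Y : Type*} (ρ : Y → Y → ℝ≥0∞) (S : Set Y)
    (g : Y → ℝ≥0∞) (f : Y → EReal) : Prop :=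
  ∀ (γ : ℝ → Y) (L : ℝ), 0 < L → Set.MapsTo γ (Set.Icc 0 L) S →
    IsArcLengthParamWith ρ γ L →
    erealAbs (f (γ L) - f (γ 0)) ≤ ∫⁻ t in Set.Icc 0 L, g (γ t)

/-- Upper gradient on `S` with respect to the ambient metric. -/
def IsUpperGradientOn {Y : Type*} [PseudoEMetricSpace Y] (S : Set Y)
    (g : Y → ℝ≥0∞) (f : Y → EReal) : Prop :=
  IsUpperGradientWith (fun x y => edist x y) S g f

/-- The `p`-th power of the Newtonian norm of `f` on `S` with respect to the
measure `m` and the distance `ρ`: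
`∫_S |f|^p dm + inf {∫_S g^p dm : g a Borel upper gradient of f on S w.r.t. ρ}`. -/
def npEnergyWith {Y : Type*} [MeasurableSpace Y] (m : Measure Y) (p : ℝ)
    (ρ : Y → Y → ℝ≥0∞) (S : Set Y) (f : Y → ℝ) : ℝ≥0∞ :=
  (∫⁻ y in S, ENNReal.ofReal |f y| ^ p ∂m) +
    ⨅ g ∈ {g : Y → ℝ≥0∞ | Measurable g ∧
        IsUpperGradientWith ρ S g (fun y => (f y : EReal))},
      ∫⁻ y in S, g y ^ p ∂m

/-- The `p`-th power of the Newtonian norm of `f` on `S ⊆ Y` (w.r.t. the ambient metric). -/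
def npEnergyOn {Y : Type*} [PseudoEMetricSpace Y] [MeasurableSpace Y]
    (m : Measure Y) (p : ℝ) (S : Set Y) (f : Y → ℝ) : ℝ≥0∞ :=
  npEnergyWith m p (fun x y => edist x y) S f

/-- `f ∈ N^{1,p}(S, m)`. -/
def MemNp {Y : Type*} [PseudoEMetricSpace Y] [MeasurableSpace Y]
    (m : Measure Y) (p : ℝ) (S : Set Y) (f : Y → ℝ) : Prop :=
  Measurable f ∧ npEnergyOn m p S f ≠ ⊤

/-- The Sobolev capacity `C_p(E; S)` of `E ⊆ S`. -/
def CpOn {Y : Type*} [PseudoEMetricSpace Y] [MeasurableSpace Y]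
    (m : Measure Y) (p : ℝ) (S E : Set Y) : ℝ≥0∞ :=
  ⨅ u ∈ {u : Y → ℝ | MemNp m p S u ∧ ∀ x ∈ E, u x = 1}, npEnergyOn m p S u

/-- The capacity `bC_p(E; S)` of `E ⊆ closure S`. -/
def bCpOn {Y : Type*} [PseudoEMetricSpace Y] [MeasurableSpace Y]
    (m : Measure Y) (p : ℝ) (S E : Set Y) : ℝ≥0∞ :=
  ⨅ u ∈ {u : Y → ℝ | MemNp m p S u ∧ (∀ x ∈ E ∩ S, 1 ≤ u x) ∧
      ∀ x ∈ E ∩ (closure S \ S),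
        (1 : EReal) ≤ Filter.liminf (fun y => (u y : EReal)) (nhdsWithin x S)},
    npEnergyOn m p S u

/-- The Mazurkiewicz distance on `S`. -/
def mazDist {Y : Type*} [PseudoEMetricSpace Y] (S : Set Y) (x y : Y) : ℝ≥0∞ :=
  ⨅ E ∈ {E : Set Y | E ⊆ S ∧ IsConnected E ∧ x ∈ E ∧ y ∈ E}, EMetric.diam E

/-- The inner metric on `S`: the infimum of lengths of curves in `S` joining
`x` and `y` (`∞` if there are none). -/
def innerDist {Y : Type*} [PseudoEMetricSpace Y] (S : Set Y) (x y : Y) : ℝ≥0∞ :=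
  ⨅ c ∈ {c : (ℝ → Y) × ℝ × ℝ | c.2.1 ≤ c.2.2 ∧
      ContinuousOn c.1 (Set.Icc c.2.1 c.2.2) ∧
      Set.MapsTo c.1 (Set.Icc c.2.1 c.2.2) S ∧ c.1 c.2.1 = x ∧ c.1 c.2.2 = y},
    eVariationOn c.1 (Set.Icc c.2.1 c.2.2)

/-- `S` is `L`-quasiconvex: any two points of `S` can be joined by a curve in `S`
of length at most `L` times their distance. -/
def LQuasiconvexOn {Y : Type*} [PseudoMetricSpace Y] (S : Set Y) (L : ℝ) : Prop :=
  ∀ x ∈ S, ∀ y ∈ S, ∃ (γ : ℝ → Y) (a b : ℝ), a ≤ b ∧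
    ContinuousOn γ (Set.Icc a b) ∧ Set.MapsTo γ (Set.Icc a b) S ∧
    γ a = x ∧ γ b = y ∧ eVariationOn γ (Set.Icc a b) ≤ ENNReal.ofReal (L * dist x y)

/-- A quasiconvex metric space. -/
def QuasiconvexSpace (Y : Type*) [PseudoMetricSpace Y] : Prop :=
  ∃ L : ℝ, 1 ≤ L ∧ LQuasiconvexOn (Set.univ : Set Y) L

/-- A bounded domain: a bounded nonempty open connected set. -/
def IsBoundedDomain {Y : Type*} [PseudoMetricSpace Y] (Ω : Set Y) : Prop :=
  IsOpen Ω ∧ IsConnected Ω ∧ Bornology.IsBounded Ω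

/-- `Ω` is finitely connected at the boundary. -/
def FinConnAtBoundary {Y : Type*} [MetricSpace Y] (Ω : Set Y) : Prop :=
  ∀ x₀ ∈ frontier Ω, ∀ r : ℝ, 0 < r → ∃ G : Set Y, IsOpen G ∧ x₀ ∈ G ∧
    G ⊆ Metric.ball x₀ r ∧
    {C : Set Y | ∃ x ∈ G ∩ Ω, C = connectedComponentIn (G ∩ Ω) x}.Finite

/-- The standing assumption on the measure: every ball has positive finite measure. -/
def BallRegular {Y : Type*} [PseudoMetricSpace Y] [MeasurableSpace Y]
    (m : Measure Y) : Prop :=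
  ∀ (x : Y) (r : ℝ), 0 < r → 0 < m (Metric.ball x r) ∧ m (Metric.ball x r) < ⊤

/-- The measure `m` is (globally) doubling. -/
def DoublingMeasure' {Y : Type*} [PseudoMetricSpace Y] [MeasurableSpace Y]
    (m : Measure Y) : Prop :=
  ∃ C : ℝ≥0, 0 < C ∧ ∀ (x : Y) (r : ℝ), 0 < r →
    m (Metric.ball x (2 * r)) ≤ C * m (Metric.ball x r)

/-- `(Y, m)` supports a `p`-Poincaré inequality. -/
def PoincareInequality {Y : Type*} [MetricSpace Y] [MeasurableSpace Y]
    (m : Measure Y) (p : ℝ) : Prop :=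
  ∃ C lam : ℝ, 0 < C ∧ 1 ≤ lam ∧
    ∀ (x : Y) (r : ℝ), 0 < r → ∀ f : Y → ℝ, Integrable f m →
      ∀ g : Y → ℝ≥0∞, Measurable g →
        IsUpperGradientOn (Set.univ : Set Y) g (fun y => (f y : EReal)) →
        ENNReal.ofReal (⨍ y in Metric.ball x r,
            |f y - ⨍ z in Metric.ball x r, f z ∂m| ∂m) ≤
          ENNReal.ofReal (C * Metric.diam (Metric.ball x r)) *
            ((∫⁻ y in Metric.ball x (lam * r), g y ^ p ∂m) /
              m (Metric.ball x (lam * r))) ^ (1 / p)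


/-! ### Auxiliary lemmas for Statement 4 -/

lemma mazDist_le_diam {Y : Type*} [PseudoEMetricSpace Y] {S E : Set Y} {x y : Y}
    (hE : E ⊆ S) (hc : IsConnected E) (hx : x ∈ E) (hy : y ∈ E) :
    mazDist S x y ≤ EMetric.diam E :=
  iInf₂_le E ⟨hE, hc, hx, hy⟩

lemma edist_le_mazDist {Y : Type*} [PseudoEMetricSpace Y] {S : Set Y} {x y : Y} :
    edist x y ≤ mazDist S x y :=
  le_iInf₂ fun _E hE => EMetric.edist_le_diam_of_mem hE.2.2.1 hE.2.2.2

lemma exists_of_mazDist_lt {Y : Type*} [PseudoEMetricSpace Y] {S : Set Y} {x y : Y} {ε : ℝ≥0∞}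
    (h : mazDist S x y < ε) :
    ∃ E, E ⊆ S ∧ IsConnected E ∧ x ∈ E ∧ y ∈ E ∧ EMetric.diam E < ε := by
  simp only [mazDist, iInf_lt_iff, mem_setOf_eq, exists_prop] at h
  obtain ⟨E, ⟨h1, h2, h3, h4⟩, h5⟩ := h
  exact ⟨E, h1, h2, h3, h4, h5⟩

lemma ediam_le_of_subset_ball {X : Type*} [PseudoMetricSpace X] {c : X} {r : ℝ} {E : Set X}
    (h : E ⊆ Metric.ball c r) : EMetric.diam E ≤ ENNReal.ofReal (2 * r) := by
  refine EMetric.diam_le fun x hx y hy => ?_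
  calc edist x y ≤ edist x c + edist c y := edist_triangle _ _ _
    _ ≤ ENNReal.ofReal r + ENNReal.ofReal r := by
        gcongr
        · rw [edist_dist]; exact ENNReal.ofReal_le_ofReal (h hx).le
        · rw [edist_comm, edist_dist]; exact ENNReal.ofReal_le_ofReal (h hy).le
    _ = ENNReal.ofReal (2 * r) := by
        have hr : (0:ℝ) ≤ r := dist_nonneg.trans (h hx).le
        rw [← ENNReal.ofReal_add hr hr, two_mul]

/-- `Ω` is totally bounded for the Mazurkiewicz distance. -/
def TBmaz {X : Type*} [MetricSpace X] (Ω : Set X) : Prop :=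
  ∀ ε : ℝ≥0∞, 0 < ε → ∃ s : Set X, s.Finite ∧ s ⊆ Ω ∧
    ∀ x ∈ Ω, ∃ y ∈ s, mazDist Ω x y < ε

lemma compact_iff_TBmaz {X : Type*} [MetricSpace X] (Ω : Set X)
    (Z : Type*) [MetricSpace Z] [CompleteSpace Z] (ι : Ω → Z)
    (hι : ∀ x y : Ω, edist (ι x) (ι y) = mazDist Ω (x : X) (y : X))
    (hdense : DenseRange ι) :
    CompactSpace Z ↔ TBmaz Ω := by
  have hinj : Function.Injective ι := by
    intro a b hab
    have h1 : mazDist Ω (a : X) (b : X) = 0 := by rw [← hι, hab, edist_self]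
    have h2 : edist (a : X) (b : X) = 0 :=
      le_antisymm (h1 ▸ edist_le_mazDist) zero_le
    exact Subtype.ext (edist_eq_zero.mp h2)
  constructor
  · intro hZ
    have htb : TotallyBounded (Set.range ι) :=
      isCompact_univ.totallyBounded.subset (subset_univ _)
    intro ε hε
    obtain ⟨t, hts, htf, hcov⟩ := EMetric.totallyBounded_iff'.mp htb ε hε
    refine ⟨Subtype.val '' (ι ⁻¹' t), ((htf.preimage hinj.injOn).image _), ?_, ?_⟩
    · rintro _ ⟨w, _, rfl⟩; exact w.2
    · intro x hx
      have : ι ⟨x, hx⟩ ∈ ⋃ y ∈ t, EMetric.ball y ε := hcov ⟨⟨x, hx⟩, rfl⟩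
      obtain ⟨z, hzt, hz⟩ := mem_iUnion₂.mp this
      obtain ⟨w, rfl⟩ := hts hzt
      refine ⟨(w : X), ⟨w, hzt, rfl⟩, ?_⟩
      have := hι ⟨x, hx⟩ w
      rw [← this]
      exact hz
  · intro htb
    have htb' : TotallyBounded (Set.range ι) := by
      refine EMetric.totallyBounded_iff.mpr fun ε hε => ?_
      obtain ⟨s, hsfin, hsΩ, hcov⟩ := htb ε hε
      refine ⟨ι '' {w : Ω | (w : X) ∈ s},
        (hsfin.preimage Subtype.val_injective.injOn).image _, ?_⟩
      rintro _ ⟨w, rfl⟩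
      obtain ⟨y, hys, hlt⟩ := hcov (w : X) w.2
      exact mem_iUnion₂.mpr ⟨ι ⟨y, hsΩ hys⟩, ⟨⟨y, hsΩ hys⟩, hys, rfl⟩,
        by rw [EMetric.mem_ball, hι]; exact hlt⟩
    have huniv : TotallyBounded (Set.univ : Set Z) := by
      rw [← hdense.closure_eq]; exact htb'.closure
    exact isCompact_univ_iff.mp (isCompact_iff_totallyBounded_isComplete.mpr
      ⟨huniv, completeSpace_iff_isComplete_univ.mp inferInstance⟩)

lemma finconn_to_TBmaz {X : Type*} [MetricSpace X] [ProperSpace X]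
    [LocallyConnectedSpace X] {Ω : Set X} (hΩ : IsBoundedDomain Ω)
    (hfc : FinConnAtBoundary Ω) : TBmaz Ω := by
  classical
  obtain ⟨hopen, hconn, hbdd⟩ := hΩ
  obtain ⟨x0, hx0⟩ := hconn.nonempty
  have hXne : Nonempty X := ⟨x0⟩
  intro ε hε
  obtain ⟨r, hr0, hrε⟩ : ∃ r : ℝ, 0 < r ∧ ENNReal.ofReal (2 * r) < ε := by
    rcases eq_or_ne ε ⊤ with h | h
    · exact ⟨1, one_pos, by simp [h]⟩
    · have ht : 0 < ε.toReal := ENNReal.toReal_pos hε.ne' h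
      refine ⟨ε.toReal / 8, by positivity, ?_⟩
      have : ENNReal.ofReal (2 * (ε.toReal / 8)) < ENNReal.ofReal ε.toReal := by
        rw [ENNReal.ofReal_lt_ofReal_iff ht]; linarith
      rwa [ENNReal.ofReal_toReal h] at this
  have hfr : IsCompact (frontier Ω) :=
    (hbdd.isCompact_closure).of_isClosed_subset isClosed_frontier
      (frontier_subset_closure (s := Ω))
  choose G hGo hGm hGb hGf using fun p : frontier Ω => hfc p p.2 r hr0
  obtain ⟨I, hI⟩ := hfr.elim_finite_subcover G hGo
    (fun x hx => mem_iUnion.mpr ⟨⟨x, hx⟩, hGm _⟩)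
  set U : Set X := ⋃ i ∈ I, G i with hU
  have hUopen : IsOpen U := isOpen_biUnion fun i _ => hGo i
  set K : Set X := closure Ω \ U with hK
  have hKΩ : K ⊆ Ω := by
    rintro x ⟨hxc, hxU⟩
    by_contra hxΩ
    have : x ∈ frontier Ω := by
      rw [frontier_eq_closure_inter_closure, hopen.isClosed_compl.closure_eq]
      exact ⟨hxc, hxΩ⟩
    exact hxU (hI this)
  have hKcomp : IsCompact K :=
    (hbdd.isCompact_closure).of_isClosed_subset
      (isClosed_closure.inter hUopen.isClosed_compl) diff_subset
  have hV : ∀ x : K, ∃ V : Set X, V ⊆ Ω ∩ Metric.ball (x : X) r ∧ IsOpen V ∧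
      (x : X) ∈ V ∧ IsConnected V := by
    intro x
    refine locallyConnectedSpace_iff_subsets_isOpen_isConnected.mp inferInstance (x : X)
      (Ω ∩ Metric.ball (x : X) r) ?_
    exact (hopen.inter isOpen_ball).mem_nhds ⟨hKΩ x.2, mem_ball_self hr0⟩
  choose V hVsub hVopen hVmem hVconn using hV
  obtain ⟨J, hJ⟩ := hKcomp.elim_finite_subcover V hVopen
    (fun x hx => mem_iUnion.mpr ⟨⟨x, hx⟩, hVmem _⟩)
  let pick : Set X → X := fun C => if h : C.Nonempty then h.choose else x0
  have pick_mem : ∀ {C : Set X}, C.Nonempty → pick C ∈ C := by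
    intro C h
    simp only [pick, dif_pos h]
    exact h.choose_spec
  let comps : frontier Ω → Set (Set X) :=
    fun i => {C : Set X | ∃ x ∈ G i ∩ Ω, C = connectedComponentIn (G i ∩ Ω) x}
  refine ⟨(Subtype.val '' (J : Set K)) ∪ ⋃ i ∈ I, pick '' comps i, ?_, ?_, ?_⟩
  · exact ((J.finite_toSet.image _).union
      (Set.Finite.biUnion I.finite_toSet fun i _ => (hGf i).image _))
  · rintro x (⟨j, _, rfl⟩ | hx)
    · exact hKΩ j.2
    · obtain ⟨i, _, C, hC, rfl⟩ := by
        simpa only [mem_iUnion, mem_image, exists_prop] using hx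
      obtain ⟨z, hz, rfl⟩ := hC
      have : connectedComponentIn (G i ∩ Ω) z ⊆ Ω :=
        (connectedComponentIn_subset _ _).trans inter_subset_right
      exact this (pick_mem ⟨z, mem_connectedComponentIn hz⟩)
  · intro x hx
    by_cases hxK : x ∈ K
    · obtain ⟨j, hjJ, hj⟩ := by
        simpa only [mem_iUnion, exists_prop] using hJ hxK
      refine ⟨(j : X), Or.inl ⟨j, hjJ, rfl⟩, ?_⟩
      calc mazDist Ω x (j : X)
          ≤ EMetric.diam (V j) :=
            mazDist_le_diam ((hVsub j).trans inter_subset_left) (hVconn j) hj (hVmem j)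
        _ ≤ ENNReal.ofReal (2 * r) :=
            ediam_le_of_subset_ball ((hVsub j).trans inter_subset_right)
        _ < ε := hrε
    · have hxU : x ∈ U := by
        by_contra hc
        exact hxK ⟨subset_closure hx, hc⟩
      obtain ⟨i, hiI, hxG⟩ := by
        simpa only [hU, mem_iUnion, exists_prop] using hxU
      have hxGΩ : x ∈ G i ∩ Ω := ⟨hxG, hx⟩
      set C := connectedComponentIn (G i ∩ Ω) x with hCdef
      have hCne : C.Nonempty := ⟨x, mem_connectedComponentIn hxGΩ⟩
      have hy : pick C ∈ C := pick_mem hCne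
      refine ⟨pick C, Or.inr (mem_iUnion₂.mpr ⟨i, hiI, ⟨C, ⟨x, hxGΩ, rfl⟩, rfl⟩⟩), ?_⟩
      calc mazDist Ω x (pick C)
          ≤ EMetric.diam C :=
            mazDist_le_diam ((connectedComponentIn_subset _ _).trans inter_subset_right)
              (isConnected_connectedComponentIn_iff.mpr hxGΩ)
              (mem_connectedComponentIn hxGΩ) hy
        _ ≤ ENNReal.ofReal (2 * r) :=
            ediam_le_of_subset_ball
              (((connectedComponentIn_subset _ _).trans inter_subset_left).trans (hGb i))
        _ < ε := hrε

lemma TBmaz_to_finconn {X : Type*} [MetricSpace X] [LocallyConnectedSpace X]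
    {Ω : Set X} (hopen : IsOpen Ω) (htb : TBmaz Ω) : FinConnAtBoundary Ω := by
  intro x₀ hx₀ r hr
  obtain ⟨s, hsfin, hsΩ, hcov⟩ := htb (ENNReal.ofReal (r / 4))
    (ENNReal.ofReal_pos.mpr (by positivity))
  set D : Set X := Metric.ball x₀ r ∩ Ω with hD
  have hDopen : IsOpen D := isOpen_ball.inter hopen
  set B' : Set X := Metric.ball x₀ (r / 2) with hB'
  have key : ∀ y ∈ B' ∩ Ω, ∃ i ∈ s,
      connectedComponentIn D y = connectedComponentIn D i := by
    rintro y ⟨hyB, hyΩ⟩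
    obtain ⟨i, his, hilt⟩ := hcov y hyΩ
    obtain ⟨E, hEΩ, hEc, hyE, hiE, hEd⟩ := exists_of_mazDist_lt hilt
    have hEB : E ⊆ Metric.ball x₀ r := by
      intro z hz
      have h1 : edist z y < ENNReal.ofReal (r / 4) :=
        lt_of_le_of_lt (EMetric.edist_le_diam_of_mem hz hyE) hEd
      have h2 : dist z y < r / 4 := by
        rw [edist_dist] at h1
        exact (ENNReal.ofReal_lt_ofReal_iff_of_nonneg dist_nonneg).mp h1
      have h3 : dist y x₀ < r / 2 := hyB
      calc dist z x₀ ≤ dist z y + dist y x₀ := dist_triangle _ _ _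
        _ < r := by linarith
    have hED : E ⊆ D := subset_inter hEB hEΩ
    have h1 : E ⊆ connectedComponentIn D y :=
      hEc.isPreconnected.subset_connectedComponentIn hyE hED
    exact ⟨i, his, connectedComponentIn_eq (h1 hiE)⟩
  refine ⟨B' ∪ ⋃ y ∈ B' ∩ Ω, connectedComponentIn D y, ?_, ?_, ?_, ?_⟩
  · exact isOpen_ball.union (isOpen_biUnion fun y _ => hDopen.connectedComponentIn)
  · exact Or.inl (mem_ball_self (by positivity))
  · rintro z (hz | hz)
    · exact Metric.ball_subset_ball (by linarith) hz
    · obtain ⟨y, _, hzy⟩ := mem_iUnion₂.mp hz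
      exact ((connectedComponentIn_subset _ _).trans inter_subset_left) hzy
  · set G : Set X := B' ∪ ⋃ y ∈ B' ∩ Ω, connectedComponentIn D y with hG
    have hGΩ : G ∩ Ω = ⋃ y ∈ B' ∩ Ω, connectedComponentIn D y := by
      ext z
      constructor
      · rintro ⟨hz | hz, hzΩ⟩
        · have hzD : z ∈ D := ⟨Metric.ball_subset_ball (by linarith) hz, hzΩ⟩
          exact mem_iUnion₂.mpr ⟨z, ⟨hz, hzΩ⟩, mem_connectedComponentIn hzD⟩
        · exact hz
      · intro hz
        obtain ⟨y, hy, hzy⟩ := mem_iUnion₂.mp hz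
        exact ⟨Or.inr hz, ((connectedComponentIn_subset _ _).trans inter_subset_right) hzy⟩
    have hsubD : G ∩ Ω ⊆ D := by
      rw [hGΩ]
      exact iUnion₂_subset fun y _ => connectedComponentIn_subset D y
    refine Set.Finite.subset (hsfin.image (fun i => connectedComponentIn D i)) ?_
    rintro C ⟨x, hx, rfl⟩
    have hx' : x ∈ ⋃ y ∈ B' ∩ Ω, connectedComponentIn D y := hGΩ ▸ hx
    obtain ⟨y, hy, hxy⟩ := mem_iUnion₂.mp hx'
    obtain ⟨i, his, hyi⟩ := key y hy
    have hxD : x ∈ D := hsubD hx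
    have e1 : connectedComponentIn D x = connectedComponentIn D y :=
      (connectedComponentIn_eq hxy).symm
    have h2 : connectedComponentIn D y ⊆ G ∩ Ω := by
      rw [hGΩ]
      exact subset_iUnion₂ (s := fun y _ => connectedComponentIn D y) y hy
    have hle : connectedComponentIn (G ∩ Ω) x ⊆ connectedComponentIn D x :=
      (isConnected_connectedComponentIn_iff.mpr hx).isPreconnected.subset_connectedComponentIn
        (mem_connectedComponentIn hx) ((connectedComponentIn_subset _ _).trans hsubD)
    have hge : connectedComponentIn D x ⊆ connectedComponentIn (G ∩ Ω) x :=
      (isConnected_connectedComponentIn_iff.mpr hxD).isPreconnected.subset_connectedComponentIn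
        (mem_connectedComponentIn hxD) (e1 ▸ h2)
    exact ⟨i, his, by rw [hle.antisymm hge, e1, hyi]⟩

/-! ### Statement 4 -/

theorem statement4 {X : Type*} [MetricSpace X] [ProperSpace X]
    [LocallyConnectedSpace X] (Ω : Set X) (hΩ : IsBoundedDomain Ω)
    (Z : Type*) [MetricSpace Z] [CompleteSpace Z] (ι : Ω → Z)
    (hι : ∀ x y : Ω, edist (ι x) (ι y) = mazDist Ω (x : X) (y : X))
    (hdense : DenseRange ι) :
    CompactSpace Z ↔ FinConnAtBoundary Ω := by
  rw [compact_iff_TBmaz Ω Z ι hι hdense]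
  exact ⟨fun h => TBmaz_to_finconn hΩ.1 h, fun h => finconn_to_TBmaz hΩ h⟩

end
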